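/- Discrete linear momentum conservation: for any constant vector c, ⟨∇* c⟩_i = 0 for each interior cell (since Σ_j (|Γ_ij|/r_ij) x_ij = 0), and hence under the semi-discrete momentum equation ρ_i dv_i/dt = ⟨div T⟩_i with constant masses M_i, the total momentum Σ_i M_i v_i is constant in time. -/

import Mathlib

open scoped RealInnerProductSpace

/-- Outer product of two vectors in `ℝ²`. -/
def outer (a b : EuclideanSpace ℝ (Fin 2)) : Matrix (Fin 2) (Fin 2) ℝ :=
  fun k l => a k * b l

/-- Frobenius inner product. -/
def frob (Amat Bmat : Matrix (Fin 2) (Fin 2) ℝ) : ℝ :=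
  ∑ k, ∑ l, Amat k l * Bmat k l

/-- The negative-adjoint gradient of the constant field `c` at cell `i`. -/
noncomputable def adjGradConst {N : ℕ} (x : Fin N → EuclideanSpace ℝ (Fin 2))
    (A : Fin N → ℝ) (Γ : Fin N → Fin N → ℝ)
    (m : Fin N → Fin N → EuclideanSpace ℝ (Fin 2)) (i : Fin N)
    (c : EuclideanSpace ℝ (Fin 2)) : Matrix (Fin 2) (Fin 2) ℝ :=
  (A i)⁻¹ • ∑ j, (Γ i j / dist (x i) (x j)) •
    (outer (c - c) (m i j - (2:ℝ)⁻¹ • (x i + x j)) - outer c (x i - x j))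
theorem discrete_momentum_conservation {N : ℕ}
    (x : Fin N → EuclideanSpace ℝ (Fin 2))
    (A ρ M : Fin N → ℝ) (hApos : ∀ i, 0 < A i) (hρpos : ∀ i, 0 < ρ i)
    (hM : ∀ i, A i * ρ i = M i)
    (Γ : Fin N → Fin N → ℝ) (hΓnn : ∀ i j, 0 ≤ Γ i j) (hΓdiag : ∀ i, Γ i i = 0)
    (m : Fin N → Fin N → EuclideanSpace ℝ (Fin 2))
    -- interior-cell identity ∑_j (|Γ_ij|/r_ij) x_ij = 0
    (hx : ∀ i, (∑ j, (Γ i j / dist (x i) (x j)) • (x i - x j))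
            = (0 : EuclideanSpace ℝ (Fin 2)))
    (v f : Fin N → ℝ → EuclideanSpace ℝ (Fin 2))
    (T : Fin N → ℝ → Matrix (Fin 2) (Fin 2) ℝ)
    (hTsymm : ∀ i t, (T i t).transpose = T i t)
    -- momentum equation ρ_i dv_i/dt = ⟨div T⟩_i =: f_i
    (hv : ∀ i t, HasDerivAt (v i) ((ρ i)⁻¹ • f i t) t)
    -- discrete integration by parts against constant fields
    (hibp : ∀ t (c : EuclideanSpace ℝ (Fin 2)),
      (∑ i, A i * ⟪f i t, c⟫)
        = -(∑ i, A i * frob (T i t) (adjGradConst x A Γ m i c))) :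
    (∀ i c, adjGradConst x A Γ m i c = 0) ∧
    (∀ t, (∑ i, M i • v i t) = ∑ i, M i • v i 0) := by
  have hgrad : ∀ i c, adjGradConst x A Γ m i c = 0 := by
    intro i c
    unfold adjGradConst
    have h1 : ∀ j : Fin N, (Γ i j / dist (x i) (x j)) •
        (outer (c - c) (m i j - (2:ℝ)⁻¹ • (x i + x j)) - outer c (x i - x j))
        = ((Γ i j / dist (x i) (x j)) : ℝ) • (- outer c (x i - x j)) := by
      intro j
      congr 1
      have : outer (c - c) (m i j - (2:ℝ)⁻¹ • (x i + x j)) = 0 := by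
        funext k l
        simp [outer]
      rw [this]; simp
    rw [Finset.sum_congr rfl (fun j _ => h1 j)]
    have h2 : (∑ j, ((Γ i j / dist (x i) (x j)) : ℝ) • (- outer c (x i - x j))) = 0 := by
      funext k l
      have hx' : (∑ j, (Γ i j / dist (x i) (x j)) • (x i - x j)) l = (0 : EuclideanSpace ℝ (Fin 2)) l :=
        congrArg (fun w : EuclideanSpace ℝ (Fin 2) => w l) (hx i)
      have hsum : (∑ j, (Γ i j / dist (x i) (x j)) • (x i - x j)) l
          = ∑ j, (Γ i j / dist (x i) (x j)) * ((x i) l - (x j) l) := by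
        rw [WithLp.ofLp_sum, Finset.sum_apply]
        apply Finset.sum_congr rfl
        intro j _
        simp [PiLp.smul_apply, PiLp.sub_apply, smul_eq_mul]
      rw [hsum] at hx'
      have : (∑ j, ((Γ i j / dist (x i) (x j)) : ℝ) • (- outer c (x i - x j))) k l
          = - (c k * ∑ j, (Γ i j / dist (x i) (x j)) * ((x i) l - (x j) l)) := by
        rw [Matrix.sum_apply]
        rw [Finset.mul_sum, ← Finset.sum_neg_distrib]
        apply Finset.sum_congr rfl
        intro j _
        simp [outer, Matrix.smul_apply, PiLp.sub_apply, smul_eq_mul]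
        ring
      rw [this, hx']
      simp
    rw [h2]; simp
  refine ⟨hgrad, ?_⟩
  have hfzero : ∀ t, (∑ i, (A i : ℝ) • f i t) = 0 := by
    intro t
    ext l
    have hc := hibp t (EuclideanSpace.single l 1)
    simp only [hgrad] at hc
    have hfrob : ∀ i, frob (T i t) (0 : Matrix (Fin 2) (Fin 2) ℝ) = 0 := by
      intro i; simp [frob]
    simp only [hfrob, mul_zero, Finset.sum_const_zero, neg_zero] at hc
    have : (∑ i, (A i : ℝ) • f i t) l = ∑ i, A i * ⟪f i t, EuclideanSpace.single l 1⟫ := by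
      rw [WithLp.ofLp_sum, Finset.sum_apply]
      apply Finset.sum_congr rfl
      intro i _
      simp [PiLp.smul_apply, smul_eq_mul, EuclideanSpace.inner_single_right]
    rw [this, hc]; rfl
  have hder : ∀ t, HasDerivAt (fun t => ∑ i, M i • v i t) 0 t := by
    intro t
    have h : HasDerivAt (fun t => ∑ i, M i • v i t)
        (∑ i, M i • ((ρ i)⁻¹ • f i t)) t :=
      HasDerivAt.fun_sum (fun i _ => (hv i t).const_smul (M i))
    have heq : (∑ i, M i • ((ρ i)⁻¹ • f i t)) = (0 : EuclideanSpace ℝ (Fin 2)) := by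
      rw [← hfzero t]
      apply Finset.sum_congr rfl
      intro i _
      rw [smul_smul, ← hM i, mul_assoc, mul_inv_cancel₀ (hρpos i).ne', mul_one]
    rwa [heq] at h
  intro t
  exact is_const_of_deriv_eq_zero (f := fun t => ∑ i, M i • v i t)
    (fun u => (hder u).differentiableAt) (fun u => (hder u).deriv) t 0
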